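/- arXiv:1405.5842 — 2 statements merged into one kernel-verified Lean document; each statement's English description precedes it below -/
import Mathlib

section
/- Let δ₁, δ₂ > 0 and let g₁₁, g₁₂, g₂₁, g₂₂ : [0,∞) → [0,1] be decreasing functions with g_{ij}(0) = 1 and 1 - g_{ij}(x) ≤ μ_{ij}·x for constants μ_{ij} ≥ 0. Fix v₁, v₂ ≥ 0 and define recursively l₁(t) = v₂ e^{-δ₂ t}, l₂(t) = v₁ e^{-δ₁ t}, and for k ≥ 1: l_{2k+1}(t) = v₂ e^{-δ₂ t} + e^{-δ₂ t} ∫₀ᵗ e^{δ₂ s}[(1 - g₁₂(l_{2k}(s))) + (1 - g₂₂(l_{2k-1}(s)))] ds, and l_{2k+2}(t) = v₁ e^{-δ₁ t} + e^{-δ₁ t} ∫₀ᵗ e^{δ₁ s}[(1 - g₁₁(l_{2k}(s))) + (1 - g₂₁(l_{2k-1}(s)))] ds. Then for every t ≥ 0 and every k ≥ 1, l_{2k+1}(t) ≥ l_{2k-1}(t) and l_{2k+2}(t) ≥ l_{2k}(t). -/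
open MeasureTheory Set intervalIntegral

lemma myhelper_int (δ : ℝ) (hδ : 0 < δ) (gA gB f h : ℝ → ℝ)
    (hA : Antitone gA) (hB : Antitone gB)
    (hA1 : ∀ x ≥ (0:ℝ), 0 ≤ gA x ∧ gA x ≤ 1)
    (hB1 : ∀ x ≥ (0:ℝ), 0 ≤ gB x ∧ gB x ≤ 1)
    (hf : ContinuousOn f (Set.Ici 0)) (hh : ContinuousOn h (Set.Ici 0))
    (hf0 : ∀ s ≥ (0:ℝ), 0 ≤ f s) (hh0 : ∀ s ≥ (0:ℝ), 0 ≤ h s)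
    {t : ℝ} (ht : 0 ≤ t) :
    IntervalIntegrable (fun s => Real.exp (δ * s) * ((1 - gA (f s)) + (1 - gB (h s))))
      volume 0 t := by
  rw [intervalIntegrable_iff_integrableOn_Icc_of_le ht]
  have hfm : AEMeasurable f (volume.restrict (Icc (0:ℝ) t)) :=
    (hf.mono (Icc_subset_Ici_self)).aemeasurable measurableSet_Icc
  have hhm : AEMeasurable h (volume.restrict (Icc (0:ℝ) t)) :=
    (hh.mono (Icc_subset_Ici_self)).aemeasurable measurableSet_Icc
  have hm : AEStronglyMeasurable
      (fun s => Real.exp (δ * s) * ((1 - gA (f s)) + (1 - gB (h s))))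
      (volume.restrict (Icc (0:ℝ) t)) := by
    apply AEMeasurable.aestronglyMeasurable
    apply AEMeasurable.mul
    · exact (Real.measurable_exp.comp (measurable_const.mul measurable_id)).aemeasurable
    · exact ((aemeasurable_const.sub (hA.measurable.comp_aemeasurable hfm)).add
        (aemeasurable_const.sub (hB.measurable.comp_aemeasurable hhm)))
  apply Integrable.mono' (g := fun _ => Real.exp (δ * t) * 2)
  · exact integrableOn_const (by simp [Real.volume_Icc])
  · exact hm
  · filter_upwards [ae_restrict_mem measurableSet_Icc] with s hs
    obtain ⟨hs0, hst⟩ := hs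
    have h1 := hA1 (f s) (hf0 s hs0)
    have h2 := hB1 (h s) (hh0 s hs0)
    have he : Real.exp (δ * s) ≤ Real.exp (δ * t) := by
      apply Real.exp_le_exp.2; nlinarith
    have hnn : (0:ℝ) ≤ Real.exp (δ * s) * ((1 - gA (f s)) + (1 - gB (h s))) := by
      have := Real.exp_pos (δ * s); nlinarith [h1.2, h2.2]
    rw [Real.norm_eq_abs, abs_of_nonneg hnn]
    nlinarith [Real.exp_pos (δ * s), h1.1, h2.1, h1.2, h2.2]

lemma myhelper_prim (f : ℝ → ℝ)
    (hint : ∀ T ≥ (0:ℝ), IntervalIntegrable f volume 0 T) :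
    ContinuousOn (fun t => ∫ s in (0:ℝ)..t, f s) (Set.Ici 0) := by
  intro x hx
  have hx1 : (0:ℝ) ≤ x + 1 := by simp at hx; linarith
  have h2 := intervalIntegral.continuousOn_primitive_interval' (hint (x+1) hx1)
      (by rw [uIcc_of_le hx1]; exact ⟨le_refl _, hx1⟩)
  have hmem : Set.uIcc (0:ℝ) (x+1) ∈ nhdsWithin x (Set.Ici 0) := by
    rw [uIcc_of_le hx1]
    have : Set.Icc (0:ℝ) (x+1) = Set.Ici 0 ∩ Set.Iic (x+1) := by
      ext y; simp [Set.mem_Icc]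
    rw [this]
    exact Filter.inter_mem self_mem_nhdsWithin
      (nhdsWithin_le_nhds (Iic_mem_nhds (by simp at hx; linarith)))
  exact (h2 x (by rw [uIcc_of_le hx1]; exact ⟨by simpa using hx, by linarith⟩)).mono_of_mem_nhdsWithin hmem

lemma myhelper_intnonneg (δ : ℝ) (gA gB f h : ℝ → ℝ)
    (hA1 : ∀ x ≥ (0:ℝ), 0 ≤ gA x ∧ gA x ≤ 1)
    (hB1 : ∀ x ≥ (0:ℝ), 0 ≤ gB x ∧ gB x ≤ 1)
    (hf0 : ∀ s ≥ (0:ℝ), 0 ≤ f s) (hh0 : ∀ s ≥ (0:ℝ), 0 ≤ h s)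
    {t : ℝ} (ht : 0 ≤ t) :
    0 ≤ ∫ s in (0:ℝ)..t, Real.exp (δ * s) * ((1 - gA (f s)) + (1 - gB (h s))) := by
  apply intervalIntegral.integral_nonneg ht
  intro s hs
  have h1 := hA1 (f s) (hf0 s hs.1)
  have h2 := hB1 (h s) (hh0 s hs.1)
  have := Real.exp_pos (δ * s)
  nlinarith [h1.2, h2.2]

lemma myhelper_main (δ : ℝ) (hδ : 0 < δ) (v : ℝ) (hv : 0 ≤ v)
    (gA gB f h : ℝ → ℝ) (hA : Antitone gA) (hB : Antitone gB)
    (hA1 : ∀ x ≥ (0:ℝ), 0 ≤ gA x ∧ gA x ≤ 1)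
    (hB1 : ∀ x ≥ (0:ℝ), 0 ≤ gB x ∧ gB x ≤ 1)
    (hf : ContinuousOn f (Set.Ici 0)) (hh : ContinuousOn h (Set.Ici 0))
    (hf0 : ∀ s ≥ (0:ℝ), 0 ≤ f s) (hh0 : ∀ s ≥ (0:ℝ), 0 ≤ h s)
    (F : ℝ → ℝ)
    (hF : ∀ t, F t = v * Real.exp (-δ * t) + Real.exp (-δ * t) *
      ∫ s in (0:ℝ)..t, Real.exp (δ * s) * ((1 - gA (f s)) + (1 - gB (h s)))) :
    ContinuousOn F (Set.Ici 0) ∧ ∀ t ≥ (0:ℝ), 0 ≤ F t := by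
  constructor
  · have hFe : F = fun t => v * Real.exp (-δ * t) + Real.exp (-δ * t) *
        ∫ s in (0:ℝ)..t, Real.exp (δ * s) * ((1 - gA (f s)) + (1 - gB (h s))) := funext hF
    rw [hFe]
    apply ContinuousOn.add
    · exact (by fun_prop : Continuous fun t => v * Real.exp (-δ * t)).continuousOn
    · exact ContinuousOn.mul
        (by fun_prop : Continuous fun t => Real.exp (-δ * t)).continuousOn
        (myhelper_prim _ (fun T hT => myhelper_int δ hδ gA gB f h hA hB hA1 hB1 hf hh hf0 hh0 hT))
  · intro t ht
    rw [hF t]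
    have h1 : 0 ≤ v * Real.exp (-δ * t) := by positivity
    have h2 := myhelper_intnonneg δ gA gB f h hA1 hB1 hf0 hh0 ht
    have h3 := Real.exp_pos (-δ * t)
    nlinarith

lemma myhelper_mono (δ : ℝ) (hδ : 0 < δ) (v : ℝ)
    (gA gB f h f' h' : ℝ → ℝ) (hA : Antitone gA) (hB : Antitone gB)
    (hA1 : ∀ x ≥ (0:ℝ), 0 ≤ gA x ∧ gA x ≤ 1)
    (hB1 : ∀ x ≥ (0:ℝ), 0 ≤ gB x ∧ gB x ≤ 1)
    (hf : ContinuousOn f (Set.Ici 0)) (hh : ContinuousOn h (Set.Ici 0))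
    (hf' : ContinuousOn f' (Set.Ici 0)) (hh' : ContinuousOn h' (Set.Ici 0))
    (hf0 : ∀ s ≥ (0:ℝ), 0 ≤ f s) (hh0 : ∀ s ≥ (0:ℝ), 0 ≤ h s)
    (hf'0 : ∀ s ≥ (0:ℝ), 0 ≤ f' s) (hh'0 : ∀ s ≥ (0:ℝ), 0 ≤ h' s)
    (hff' : ∀ s ≥ (0:ℝ), f s ≤ f' s) (hhh' : ∀ s ≥ (0:ℝ), h s ≤ h' s)
    {t : ℝ} (ht : 0 ≤ t) :
    v * Real.exp (-δ * t) + Real.exp (-δ * t) *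
      (∫ s in (0:ℝ)..t, Real.exp (δ * s) * ((1 - gA (f s)) + (1 - gB (h s)))) ≤
    v * Real.exp (-δ * t) + Real.exp (-δ * t) *
      (∫ s in (0:ℝ)..t, Real.exp (δ * s) * ((1 - gA (f' s)) + (1 - gB (h' s)))) := by
  apply add_le_add_right
  apply mul_le_mul_of_nonneg_left _ (Real.exp_pos _).le
  apply intervalIntegral.integral_mono_on ht
    (myhelper_int δ hδ gA gB f h hA hB hA1 hB1 hf hh hf0 hh0 ht)
    (myhelper_int δ hδ gA gB f' h' hA hB hA1 hB1 hf' hh' hf'0 hh'0 ht)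
  intro s hs
  apply mul_le_mul_of_nonneg_left _ (Real.exp_pos _).le
  have g1 : gA (f' s) ≤ gA (f s) := hA (hff' s hs.1)
  have g2 : gB (h' s) ≤ gB (h s) := hB (hhh' s hs.1)
  linarith

theorem stmt8 (δ₁ δ₂ : ℝ) (hδ₁ : 0 < δ₁) (hδ₂ : 0 < δ₂)
    (g₁₁ g₁₂ g₂₁ g₂₂ : ℝ → ℝ) (μ₁₁ μ₁₂ μ₂₁ μ₂₂ : ℝ)
    (hμ : 0 ≤ μ₁₁ ∧ 0 ≤ μ₁₂ ∧ 0 ≤ μ₂₁ ∧ 0 ≤ μ₂₂)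
    (hanti : Antitone g₁₁ ∧ Antitone g₁₂ ∧ Antitone g₂₁ ∧ Antitone g₂₂)
    (hrange : ∀ x ≥ (0:ℝ), (0 ≤ g₁₁ x ∧ g₁₁ x ≤ 1) ∧ (0 ≤ g₁₂ x ∧ g₁₂ x ≤ 1) ∧
      (0 ≤ g₂₁ x ∧ g₂₁ x ≤ 1) ∧ (0 ≤ g₂₂ x ∧ g₂₂ x ≤ 1))
    (hone : g₁₁ 0 = 1 ∧ g₁₂ 0 = 1 ∧ g₂₁ 0 = 1 ∧ g₂₂ 0 = 1)
    (hlip : ∀ x ≥ (0:ℝ), (1 - g₁₁ x ≤ μ₁₁ * x) ∧ (1 - g₁₂ x ≤ μ₁₂ * x) ∧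
      (1 - g₂₁ x ≤ μ₂₁ * x) ∧ (1 - g₂₂ x ≤ μ₂₂ * x))
    (v₁ v₂ : ℝ) (hv₁ : 0 ≤ v₁) (hv₂ : 0 ≤ v₂)
    (l : ℕ → ℝ → ℝ)
    (hl1 : ∀ t, l 1 t = v₂ * Real.exp (-δ₂ * t))
    (hl2 : ∀ t, l 2 t = v₁ * Real.exp (-δ₁ * t))
    (hlodd : ∀ k ≥ 1, ∀ t, l (2 * k + 1) t =
      v₂ * Real.exp (-δ₂ * t) + Real.exp (-δ₂ * t) *
        ∫ s in (0:ℝ)..t, Real.exp (δ₂ * s) *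
          ((1 - g₁₂ (l (2 * k) s)) + (1 - g₂₂ (l (2 * k - 1) s))))
    (hleven : ∀ k ≥ 1, ∀ t, l (2 * k + 2) t =
      v₁ * Real.exp (-δ₁ * t) + Real.exp (-δ₁ * t) *
        ∫ s in (0:ℝ)..t, Real.exp (δ₁ * s) *
          ((1 - g₁₁ (l (2 * k) s)) + (1 - g₂₁ (l (2 * k - 1) s)))) :
    ∀ k ≥ 1, ∀ t ≥ (0:ℝ),
      l (2 * k - 1) t ≤ l (2 * k + 1) t ∧ l (2 * k) t ≤ l (2 * k + 2) t := by
  obtain ⟨ha11, ha12, ha21, ha22⟩ := hanti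
  have hr11 : ∀ x ≥ (0:ℝ), 0 ≤ g₁₁ x ∧ g₁₁ x ≤ 1 := fun x hx => (hrange x hx).1
  have hr12 : ∀ x ≥ (0:ℝ), 0 ≤ g₁₂ x ∧ g₁₂ x ≤ 1 := fun x hx => (hrange x hx).2.1
  have hr21 : ∀ x ≥ (0:ℝ), 0 ≤ g₂₁ x ∧ g₂₁ x ≤ 1 := fun x hx => (hrange x hx).2.2.1
  have hr22 : ∀ x ≥ (0:ℝ), 0 ≤ g₂₂ x ∧ g₂₂ x ≤ 1 := fun x hx => (hrange x hx).2.2.2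
  have main : ∀ k, 1 ≤ k →
      (ContinuousOn (l (2*k-1)) (Set.Ici 0) ∧ ContinuousOn (l (2*k)) (Set.Ici 0)) ∧
      (∀ t ≥ (0:ℝ), 0 ≤ l (2*k-1) t ∧ 0 ≤ l (2*k) t) ∧
      (∀ t ≥ (0:ℝ), l (2*k-1) t ≤ l (2*k+1) t ∧ l (2*k) t ≤ l (2*k+2) t) := by
    intro k hk
    induction k, hk using Nat.le_induction with
    | base =>
      have e1 : l 1 = fun t => v₂ * Real.exp (-δ₂ * t) := funext hl1
      have e2 : l 2 = fun t => v₁ * Real.exp (-δ₁ * t) := funext hl2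
      have c1 : ContinuousOn (l 1) (Set.Ici 0) := by
        rw [e1]; exact (by fun_prop : Continuous fun t => v₂ * Real.exp (-δ₂ * t)).continuousOn
      have c2 : ContinuousOn (l 2) (Set.Ici 0) := by
        rw [e2]; exact (by fun_prop : Continuous fun t => v₁ * Real.exp (-δ₁ * t)).continuousOn
      have n1 : ∀ t ≥ (0:ℝ), 0 ≤ l 1 t := fun t _ => by rw [hl1 t]; positivity
      have n2 : ∀ t ≥ (0:ℝ), 0 ≤ l 2 t := fun t _ => by rw [hl2 t]; positivity
      refine ⟨⟨c1, c2⟩, fun t ht => ⟨n1 t ht, n2 t ht⟩, fun t ht => ⟨?_, ?_⟩⟩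
      · show l 1 t ≤ l 3 t
        have := hlodd 1 le_rfl t
        norm_num at this
        rw [this, hl1 t]
        simp only [neg_mul]
        have hint := myhelper_intnonneg δ₂ g₁₂ g₂₂ (l 2) (l 1) hr12 hr22 n2 n1 ht
        nlinarith [Real.exp_pos (-(δ₂ * t)), mul_nonneg (Real.exp_pos (-(δ₂ * t))).le hint]
      · show l 2 t ≤ l 4 t
        have := hleven 1 le_rfl t
        norm_num at this
        rw [this, hl2 t]
        simp only [neg_mul]
        have hint := myhelper_intnonneg δ₁ g₁₁ g₂₁ (l 2) (l 1) hr11 hr21 n2 n1 ht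
        nlinarith [Real.exp_pos (-(δ₁ * t)), mul_nonneg (Real.exp_pos (-(δ₁ * t))).le hint]
    | succ k hk ih =>
      obtain ⟨⟨c1, c2⟩, nn, mono⟩ := ih
      have nf : ∀ s ≥ (0:ℝ), 0 ≤ l (2*k) s := fun s hs => (nn s hs).2
      have nh : ∀ s ≥ (0:ℝ), 0 ≤ l (2*k-1) s := fun s hs => (nn s hs).1
      have hFodd := hlodd k hk
      have hFeven := hleven k hk
      have Codd := myhelper_main δ₂ hδ₂ v₂ hv₂ g₁₂ g₂₂ (l (2*k)) (l (2*k-1))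
        ha12 ha22 hr12 hr22 c2 c1 nf nh (l (2*k+1)) hFodd
      have Ceven := myhelper_main δ₁ hδ₁ v₁ hv₁ g₁₁ g₂₁ (l (2*k)) (l (2*k-1))
        ha11 ha21 hr11 hr21 c2 c1 nf nh (l (2*k+2)) hFeven
      have e1 : 2*(k+1)-1 = 2*k+1 := by omega
      have e2 : 2*(k+1) = 2*k+2 := by omega
      have e3 : 2*(k+1)+1 = 2*k+3 := by omega
      have e4 : 2*(k+1)+2 = 2*k+4 := by omega
      rw [e3, e4, e1, e2]
      have nf' : ∀ s ≥ (0:ℝ), 0 ≤ l (2*k+2) s := fun s hs => Ceven.2 s hs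
      have nh' : ∀ s ≥ (0:ℝ), 0 ≤ l (2*k+1) s := fun s hs => Codd.2 s hs
      have hff' : ∀ s ≥ (0:ℝ), l (2*k) s ≤ l (2*k+2) s := fun s hs => (mono s hs).2
      have hhh' : ∀ s ≥ (0:ℝ), l (2*k-1) s ≤ l (2*k+1) s := fun s hs => (mono s hs).1
      refine ⟨⟨Codd.1, Ceven.1⟩, fun t ht => ⟨nh' t ht, nf' t ht⟩, fun t ht => ⟨?_, ?_⟩⟩
      · have hodd' := hlodd (k+1) (by omega) t
        rw [e3, e1, e2] at hodd'
        rw [hodd', hFodd t]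
        exact myhelper_mono δ₂ hδ₂ v₂ g₁₂ g₂₂ (l (2*k)) (l (2*k-1)) (l (2*k+2)) (l (2*k+1))
          ha12 ha22 hr12 hr22 c2 c1 Ceven.1 Codd.1 nf nh nf' nh' hff' hhh' ht
      · have heven' := hleven (k+1) (by omega) t
        rw [e4, e1, e2] at heven'
        rw [heven', hFeven t]
        exact myhelper_mono δ₁ hδ₁ v₁ g₁₁ g₂₁ (l (2*k)) (l (2*k-1)) (l (2*k+2)) (l (2*k+1))
          ha11 ha21 hr11 hr21 c2 c1 Ceven.1 Codd.1 nf nh nf' nh' hff' hhh' ht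
  intro k hk t ht
  exact (main k hk).2.2 t ht
end

section
/- With the recursive functions l_k as defined from decreasing Laplace-transform-type functions g_{ij} satisfying 1 - g_{ij}(x) ≤ μ_{ij} x, define the increments d⁽¹⁾₁(t) = l₁(t), d⁽²⁾₁(t) = l₂(t), and for k ≥ 2, d⁽¹⁾_k(t) = l_{2k-1}(t) - l_{2k-3}(t), d⁽²⁾_k(t) = l_{2k}(t) - l_{2k-2}(t) (assuming constant initial values so these are nonnegative). Then d⁽¹⁾_{k+1}(t) ≤ e^{-δ₂ t} ∫₀ᵗ e^{δ₂ s}[μ₂₂ d⁽¹⁾_k(s) + μ₁₂ d⁽²⁾_k(s)] ds and d⁽²⁾_{k+1}(t) ≤ e^{-δ₁ t} ∫₀ᵗ e^{δ₁ s}[μ₂₁ d⁽¹⁾_k(s) + μ₁₁ d⁽²⁾_k(s)] ds. -/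
open MeasureTheory Set intervalIntegral

lemma integrableF (δ : ℝ) (hδ : 0 ≤ δ) (gA gB : ℝ → ℝ) (hA : Antitone gA) (hB : Antitone gB)
    (hrA : ∀ x ≥ (0:ℝ), 0 ≤ gA x ∧ gA x ≤ 1) (hrB : ∀ x ≥ (0:ℝ), 0 ≤ gB x ∧ gB x ≤ 1)
    (p q : ℝ → ℝ) (T : ℝ) (hT : 0 ≤ T)
    (hp : ContinuousOn p (Icc 0 T)) (hq : ContinuousOn q (Icc 0 T))
    (hpos : ∀ s ∈ Icc (0:ℝ) T, 0 ≤ p s ∧ 0 ≤ q s) :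
    IntegrableOn (fun s => Real.exp (δ * s) * ((1 - gA (p s)) + (1 - gB (q s)))) (Icc 0 T) := by
  have hmeas : AEMeasurable (fun s => Real.exp (δ * s) * ((1 - gA (p s)) + (1 - gB (q s))))
      (volume.restrict (Icc 0 T)) := by
    have h1 : AEMeasurable (fun s => gA (p s)) (volume.restrict (Icc 0 T)) :=
      hA.measurable.comp_aemeasurable (hp.aemeasurable measurableSet_Icc)
    have h2 : AEMeasurable (fun s => gB (q s)) (volume.restrict (Icc 0 T)) :=
      hB.measurable.comp_aemeasurable (hq.aemeasurable measurableSet_Icc)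
    exact ((Real.continuous_exp.comp (continuous_const.mul continuous_id)).aemeasurable).mul
      (((aemeasurable_const.sub h1)).add (aemeasurable_const.sub h2))
  refine Integrable.mono' (g := fun _ => 2 * Real.exp (δ * T))
    (integrableOn_const measure_Icc_lt_top.ne) hmeas.aestronglyMeasurable ?_
  refine (ae_restrict_iff' measurableSet_Icc).2 (ae_of_all _ fun s hs => ?_)
  obtain ⟨hp0, hq0⟩ := hpos s hs
  obtain ⟨hgA1, hgA2⟩ := hrA (p s) hp0
  obtain ⟨hgB1, hgB2⟩ := hrB (q s) hq0
  have he : Real.exp (δ * s) ≤ Real.exp (δ * T) :=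
    Real.exp_le_exp.2 (mul_le_mul_of_nonneg_left hs.2 hδ)
  have he0 : (0:ℝ) < Real.exp (δ * s) := Real.exp_pos _
  rw [Real.norm_eq_abs, abs_of_nonneg (by nlinarith)]
  show Real.exp (δ * s) * ((1 - gA (p s)) + (1 - gB (q s))) ≤ 2 * Real.exp (δ * T)
  nlinarith [mul_le_mul he (show (1 - gA (p s)) + (1 - gB (q s)) ≤ 2 by linarith)
    (by nlinarith) (Real.exp_pos (δ * T)).le]

lemma key (δ : ℝ) (hδ : 0 ≤ δ) (gA gB : ℝ → ℝ) (μA μB : ℝ)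
    (hA : Antitone gA) (hB : Antitone gB)
    (hrA : ∀ x ≥ (0:ℝ), 0 ≤ gA x ∧ gA x ≤ 1) (hrB : ∀ x ≥ (0:ℝ), 0 ≤ gB x ∧ gB x ≤ 1)
    (hlipA : ∀ x y : ℝ, 0 ≤ x → x ≤ y → gA x - gA y ≤ μA * (y - x))
    (hlipB : ∀ x y : ℝ, 0 ≤ x → x ≤ y → gB x - gB y ≤ μB * (y - x))
    (p q p' q' : ℝ → ℝ) (t : ℝ) (ht : 0 ≤ t)
    (hp : ContinuousOn p (Icc 0 t)) (hq : ContinuousOn q (Icc 0 t))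
    (hp' : ContinuousOn p' (Icc 0 t)) (hq' : ContinuousOn q' (Icc 0 t))
    (hord : ∀ s ∈ Icc (0:ℝ) t, 0 ≤ p' s ∧ p' s ≤ p s ∧ 0 ≤ q' s ∧ q' s ≤ q s) :
    (∫ s in (0:ℝ)..t, Real.exp (δ * s) * ((1 - gA (p s)) + (1 - gB (q s)))) -
    (∫ s in (0:ℝ)..t, Real.exp (δ * s) * ((1 - gA (p' s)) + (1 - gB (q' s)))) ≤
    ∫ s in (0:ℝ)..t, Real.exp (δ * s) * (μB * (q s - q' s) + μA * (p s - p' s)) := by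
  have hI1 : IntervalIntegrable (fun s => Real.exp (δ * s) * ((1 - gA (p s)) + (1 - gB (q s))))
      volume 0 t := by
    rw [intervalIntegrable_iff_integrableOn_Ioc_of_le ht]
    exact (integrableF δ hδ gA gB hA hB hrA hrB p q t ht hp hq
      (fun s hs => ⟨(hord s hs).2.1.trans' (hord s hs).1, (hord s hs).2.2.2.trans' (hord s hs).2.2.1⟩)).mono_set
      Ioc_subset_Icc_self
  have hI2 : IntervalIntegrable (fun s => Real.exp (δ * s) * ((1 - gA (p' s)) + (1 - gB (q' s))))
      volume 0 t := by
    rw [intervalIntegrable_iff_integrableOn_Ioc_of_le ht]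
    exact (integrableF δ hδ gA gB hA hB hrA hrB p' q' t ht hp' hq'
      (fun s hs => ⟨(hord s hs).1, (hord s hs).2.2.1⟩)).mono_set Ioc_subset_Icc_self
  have hI3 : IntervalIntegrable (fun s => Real.exp (δ * s) * (μB * (q s - q' s) + μA * (p s - p' s)))
      volume 0 t := by
    apply ContinuousOn.intervalIntegrable
    rw [uIcc_of_le ht]
    exact ((Real.continuous_exp.comp (continuous_const.mul continuous_id)).continuousOn).mul
      (((continuousOn_const.mul (hq.sub hq')).add (continuousOn_const.mul (hp.sub hp'))))
  rw [← intervalIntegral.integral_sub hI1 hI2]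
  apply intervalIntegral.integral_mono_on ht (hI1.sub hI2) hI3
  intro s hs
  obtain ⟨h1, h2, h3, h4⟩ := hord s hs
  have e0 : (0:ℝ) ≤ Real.exp (δ * s) := (Real.exp_pos _).le
  have hA' := hlipA (p' s) (p s) h1 h2
  have hB' := hlipB (q' s) (q s) h3 h4
  nlinarith [mul_le_mul_of_nonneg_left hA' e0, mul_le_mul_of_nonneg_left hB' e0]

theorem stmt9 (δ₁ δ₂ : ℝ) (hδ₁ : 0 < δ₁) (hδ₂ : 0 < δ₂)
    (g₁₁ g₁₂ g₂₁ g₂₂ : ℝ → ℝ) (μ₁₁ μ₁₂ μ₂₁ μ₂₂ : ℝ)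
    (hμ : 0 ≤ μ₁₁ ∧ 0 ≤ μ₁₂ ∧ 0 ≤ μ₂₁ ∧ 0 ≤ μ₂₂)
    (hanti : Antitone g₁₁ ∧ Antitone g₁₂ ∧ Antitone g₂₁ ∧ Antitone g₂₂)
    (hrange : ∀ x ≥ (0:ℝ), (0 ≤ g₁₁ x ∧ g₁₁ x ≤ 1) ∧ (0 ≤ g₁₂ x ∧ g₁₂ x ≤ 1) ∧
      (0 ≤ g₂₁ x ∧ g₂₁ x ≤ 1) ∧ (0 ≤ g₂₂ x ∧ g₂₂ x ≤ 1))
    (hone : g₁₁ 0 = 1 ∧ g₁₂ 0 = 1 ∧ g₂₁ 0 = 1 ∧ g₂₂ 0 = 1)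
    (hlip : ∀ x y : ℝ, 0 ≤ x → x ≤ y →
      (g₁₁ x - g₁₁ y ≤ μ₁₁ * (y - x)) ∧ (g₁₂ x - g₁₂ y ≤ μ₁₂ * (y - x)) ∧
      (g₂₁ x - g₂₁ y ≤ μ₂₁ * (y - x)) ∧ (g₂₂ x - g₂₂ y ≤ μ₂₂ * (y - x)))
    (v₁ v₂ : ℝ) (hv₁ : 0 ≤ v₁) (hv₂ : 0 ≤ v₂)
    (l : ℕ → ℝ → ℝ)
    (hl1 : ∀ t, l 1 t = v₂ * Real.exp (-δ₂ * t))
    (hl2 : ∀ t, l 2 t = v₁ * Real.exp (-δ₁ * t))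
    (hlodd : ∀ k ≥ 1, ∀ t, l (2 * k + 1) t =
      v₂ * Real.exp (-δ₂ * t) + Real.exp (-δ₂ * t) *
        ∫ s in (0:ℝ)..t, Real.exp (δ₂ * s) *
          ((1 - g₁₂ (l (2 * k) s)) + (1 - g₂₂ (l (2 * k - 1) s))))
    (hleven : ∀ k ≥ 1, ∀ t, l (2 * k + 2) t =
      v₁ * Real.exp (-δ₁ * t) + Real.exp (-δ₁ * t) *
        ∫ s in (0:ℝ)..t, Real.exp (δ₁ * s) *
          ((1 - g₁₁ (l (2 * k) s)) + (1 - g₂₁ (l (2 * k - 1) s))))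
    (hmono : ∀ k ≥ 1, ∀ t ≥ (0:ℝ),
      0 ≤ l (2 * k - 1) t ∧ l (2 * k - 1) t ≤ l (2 * k + 1) t ∧
      0 ≤ l (2 * k) t ∧ l (2 * k) t ≤ l (2 * k + 2) t)
    (d₁ d₂ : ℕ → ℝ → ℝ)
    (hd₁1 : ∀ t, d₁ 1 t = l 1 t) (hd₂1 : ∀ t, d₂ 1 t = l 2 t)
    (hd₁ : ∀ k ≥ 2, ∀ t, d₁ k t = l (2 * k - 1) t - l (2 * k - 3) t)
    (hd₂ : ∀ k ≥ 2, ∀ t, d₂ k t = l (2 * k) t - l (2 * k - 2) t) :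
    ∀ k ≥ 1, ∀ t ≥ (0:ℝ),
      d₁ (k + 1) t ≤ Real.exp (-δ₂ * t) *
        ∫ s in (0:ℝ)..t, Real.exp (δ₂ * s) * (μ₂₂ * d₁ k s + μ₁₂ * d₂ k s) ∧
      d₂ (k + 1) t ≤ Real.exp (-δ₁ * t) *
        ∫ s in (0:ℝ)..t, Real.exp (δ₁ * s) * (μ₂₁ * d₁ k s + μ₁₁ * d₂ k s) := by
  obtain ⟨hμ11, hμ12, hμ21, hμ22⟩ := hμ
  obtain ⟨ha11, ha12, ha21, ha22⟩ := hanti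
  obtain ⟨ho11, ho12, ho21, ho22⟩ := hone
  have hr11 : ∀ x ≥ (0:ℝ), 0 ≤ g₁₁ x ∧ g₁₁ x ≤ 1 := fun x hx => (hrange x hx).1
  have hr12 : ∀ x ≥ (0:ℝ), 0 ≤ g₁₂ x ∧ g₁₂ x ≤ 1 := fun x hx => (hrange x hx).2.1
  have hr21 : ∀ x ≥ (0:ℝ), 0 ≤ g₂₁ x ∧ g₂₁ x ≤ 1 := fun x hx => (hrange x hx).2.2.1
  have hr22 : ∀ x ≥ (0:ℝ), 0 ≤ g₂₂ x ∧ g₂₂ x ≤ 1 := fun x hx => (hrange x hx).2.2.2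
  have hlip11 : ∀ x y : ℝ, 0 ≤ x → x ≤ y → g₁₁ x - g₁₁ y ≤ μ₁₁ * (y - x) :=
    fun x y hx hxy => (hlip x y hx hxy).1
  have hlip12 : ∀ x y : ℝ, 0 ≤ x → x ≤ y → g₁₂ x - g₁₂ y ≤ μ₁₂ * (y - x) :=
    fun x y hx hxy => (hlip x y hx hxy).2.1
  have hlip21 : ∀ x y : ℝ, 0 ≤ x → x ≤ y → g₂₁ x - g₂₁ y ≤ μ₂₁ * (y - x) :=
    fun x y hx hxy => (hlip x y hx hxy).2.2.1
  have hlip22 : ∀ x y : ℝ, 0 ≤ x → x ≤ y → g₂₂ x - g₂₂ y ≤ μ₂₂ * (y - x) :=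
    fun x y hx hxy => (hlip x y hx hxy).2.2.2
  have hcexp : ∀ c : ℝ, Continuous fun t : ℝ => Real.exp (c * t) :=
    fun c => Real.continuous_exp.comp (continuous_const.mul continuous_id)
  -- continuity of all the l's on compacts
  have hcont : ∀ k, 1 ≤ k → ∀ T, (0:ℝ) ≤ T →
      ContinuousOn (l (2 * k - 1)) (Icc 0 T) ∧ ContinuousOn (l (2 * k)) (Icc 0 T) := by
    intro k hk
    induction k, hk using Nat.le_induction with
    | base =>
      intro T hT
      constructor
      · exact ((continuous_const.mul (hcexp (-δ₂))).continuousOn).congr fun t _ => hl1 t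
      · exact ((continuous_const.mul (hcexp (-δ₁))).continuousOn).congr fun t _ => hl2 t
    | succ k hk ih =>
      intro T hT
      obtain ⟨ihq, ihp⟩ := ih T hT
      have hpos : ∀ s ∈ Icc (0:ℝ) T, 0 ≤ l (2 * k) s ∧ 0 ≤ l (2 * k - 1) s :=
        fun s hs => ⟨(hmono k hk s hs.1).2.2.1, (hmono k hk s hs.1).1⟩
      have hIodd : IntegrableOn (fun s => Real.exp (δ₂ * s) *
          ((1 - g₁₂ (l (2 * k) s)) + (1 - g₂₂ (l (2 * k - 1) s)))) (Icc 0 T) :=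
        integrableF δ₂ hδ₂.le g₁₂ g₂₂ ha12 ha22 hr12 hr22 _ _ T hT ihp ihq hpos
      have hIeven : IntegrableOn (fun s => Real.exp (δ₁ * s) *
          ((1 - g₁₁ (l (2 * k) s)) + (1 - g₂₁ (l (2 * k - 1) s)))) (Icc 0 T) :=
        integrableF δ₁ hδ₁.le g₁₁ g₂₁ ha11 ha21 hr11 hr21 _ _ T hT ihp ihq hpos
      have hPodd : ContinuousOn (fun x => ∫ s in (0:ℝ)..x, Real.exp (δ₂ * s) *
          ((1 - g₁₂ (l (2 * k) s)) + (1 - g₂₂ (l (2 * k - 1) s)))) (Icc 0 T) := by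
        have := intervalIntegral.continuousOn_primitive_interval (a := 0) (b := T)
          (μ := volume) (f := fun s => Real.exp (δ₂ * s) *
            ((1 - g₁₂ (l (2 * k) s)) + (1 - g₂₂ (l (2 * k - 1) s))))
          (by rwa [uIcc_of_le hT])
        rwa [uIcc_of_le hT] at this
      have hPeven : ContinuousOn (fun x => ∫ s in (0:ℝ)..x, Real.exp (δ₁ * s) *
          ((1 - g₁₁ (l (2 * k) s)) + (1 - g₂₁ (l (2 * k - 1) s)))) (Icc 0 T) := by
        have := intervalIntegral.continuousOn_primitive_interval (a := 0) (b := T)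
          (μ := volume) (f := fun s => Real.exp (δ₁ * s) *
            ((1 - g₁₁ (l (2 * k) s)) + (1 - g₂₁ (l (2 * k - 1) s))))
          (by rwa [uIcc_of_le hT])
        rwa [uIcc_of_le hT] at this
      have e1 : 2 * (k + 1) - 1 = 2 * k + 1 := by omega
      have e2 : 2 * (k + 1) = 2 * k + 2 := by omega
      rw [e1, e2]
      constructor
      · exact (((continuous_const.mul (hcexp (-δ₂))).continuousOn).add
          (((hcexp (-δ₂)).continuousOn).mul hPodd)).congr fun t _ => hlodd k hk t
      · exact (((continuous_const.mul (hcexp (-δ₁))).continuousOn).add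
          (((hcexp (-δ₁)).continuousOn).mul hPeven)).congr fun t _ => hleven k hk t
  intro k hk t ht
  have hexpneg₂ : (0:ℝ) ≤ Real.exp (-δ₂ * t) := (Real.exp_pos _).le
  have hexpneg₁ : (0:ℝ) ≤ Real.exp (-δ₁ * t) := (Real.exp_pos _).le
  rcases eq_or_lt_of_le hk with h1 | h2
  · -- k = 1
    obtain rfl : k = 1 := h1.symm
    have hc := hcont 1 le_rfl t ht
    norm_num at hc
    obtain ⟨hc1, hc2⟩ := hc
    have hm1 : ∀ s ∈ Icc (0:ℝ) t, 0 ≤ l 1 s ∧ 0 ≤ l 2 s := by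
      intro s hs
      have := hmono 1 le_rfl s hs.1
      norm_num at this
      exact ⟨this.1, this.2.2.1⟩
    have hlA := hlodd 1 le_rfl t
    norm_num at hlA
    have hlB := hleven 1 le_rfl t
    norm_num at hlB
    constructor
    · -- odd part
      have hkey := key δ₂ hδ₂.le g₁₂ g₂₂ μ₁₂ μ₂₂ ha12 ha22 hr12 hr22 hlip12 hlip22
        (l 2) (l 1) (fun _ => 0) (fun _ => 0) t ht hc2 hc1
        continuousOn_const continuousOn_const
        (fun s hs => ⟨le_rfl, (hm1 s hs).2, le_rfl, (hm1 s hs).1⟩)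
      simp only [ho12, ho22, sub_self, add_zero, zero_add, mul_zero, sub_zero,
        intervalIntegral.integral_zero] at hkey
      have hEq : d₁ 2 t = Real.exp (-δ₂ * t) *
          ∫ s in (0:ℝ)..t, Real.exp (δ₂ * s) * ((1 - g₁₂ (l 2 s)) + (1 - g₂₂ (l 1 s))) := by
        have := hd₁ 2 (by norm_num) t
        norm_num at this
        rw [this, hlA, hl1 t]
        simp only [neg_mul]
        exact add_sub_cancel_left _ _
      have hC : (∫ s in (0:ℝ)..t, Real.exp (δ₂ * s) * (μ₂₂ * l 1 s + μ₁₂ * l 2 s)) =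
          ∫ s in (0:ℝ)..t, Real.exp (δ₂ * s) * (μ₂₂ * d₁ 1 s + μ₁₂ * d₂ 1 s) :=
        intervalIntegral.integral_congr fun s _ => by rw [hd₁1 s, hd₂1 s]
      rw [hEq, ← hC]
      exact mul_le_mul_of_nonneg_left hkey hexpneg₂
    · -- even part
      have hkey := key δ₁ hδ₁.le g₁₁ g₂₁ μ₁₁ μ₂₁ ha11 ha21 hr11 hr21 hlip11 hlip21
        (l 2) (l 1) (fun _ => 0) (fun _ => 0) t ht hc2 hc1
        continuousOn_const continuousOn_const
        (fun s hs => ⟨le_rfl, (hm1 s hs).2, le_rfl, (hm1 s hs).1⟩)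
      simp only [ho11, ho21, sub_self, add_zero, zero_add, mul_zero, sub_zero,
        intervalIntegral.integral_zero] at hkey
      have hEq : d₂ 2 t = Real.exp (-δ₁ * t) *
          ∫ s in (0:ℝ)..t, Real.exp (δ₁ * s) * ((1 - g₁₁ (l 2 s)) + (1 - g₂₁ (l 1 s))) := by
        have := hd₂ 2 (by norm_num) t
        norm_num at this
        rw [this, hlB, hl2 t]
        simp only [neg_mul]
        exact add_sub_cancel_left _ _
      have hC : (∫ s in (0:ℝ)..t, Real.exp (δ₁ * s) * (μ₂₁ * l 1 s + μ₁₁ * l 2 s)) =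
          ∫ s in (0:ℝ)..t, Real.exp (δ₁ * s) * (μ₂₁ * d₁ 1 s + μ₁₁ * d₂ 1 s) :=
        intervalIntegral.integral_congr fun s _ => by rw [hd₁1 s, hd₂1 s]
      rw [hEq, ← hC]
      exact mul_le_mul_of_nonneg_left hkey hexpneg₁
  · -- k ≥ 2
    obtain ⟨m, rfl⟩ : ∃ m, k = m + 1 := ⟨k - 1, by omega⟩
    have hm : 1 ≤ m := by omega
    have E1 : 2 * (m + 1) - 1 = 2 * m + 1 := by omega
    have E2 : 2 * (m + 1) = 2 * m + 2 := by omega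
    have E3 : 2 * (m + 1) + 1 = 2 * m + 3 := by omega
    have E6 : 2 * (m + 1) - 3 = 2 * m - 1 := by omega
    have E9 : 2 * (m + 1) - 2 = 2 * m := by omega
    have E10 : 2 * (m + 1) + 2 = 2 * m + 4 := by omega
    -- continuity
    have hcA := hcont (m + 1) (by omega) t ht
    rw [E1, E2] at hcA
    obtain ⟨hq, hp⟩ := hcA
    have hcB := hcont m hm t ht
    obtain ⟨hq', hp'⟩ := hcB
    -- ordering
    have hord : ∀ s ∈ Icc (0:ℝ) t, 0 ≤ l (2 * m) s ∧ l (2 * m) s ≤ l (2 * m + 2) s ∧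
        0 ≤ l (2 * m - 1) s ∧ l (2 * m - 1) s ≤ l (2 * m + 1) s := by
      intro s hs
      have := hmono m hm s hs.1
      exact ⟨this.2.2.1, this.2.2.2, this.1, this.2.1⟩
    -- recursion equations
    have hlA := hlodd (m + 1) (by omega) t
    rw [E3, E1, E2] at hlA
    have hlB := hlodd m hm t
    have hlC := hleven (m + 1) (by omega) t
    rw [E10, E1, E2] at hlC
    have hlD := hleven m hm t
    constructor
    · -- odd part
      have hkey := key δ₂ hδ₂.le g₁₂ g₂₂ μ₁₂ μ₂₂ ha12 ha22 hr12 hr22 hlip12 hlip22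
        (l (2 * m + 2)) (l (2 * m + 1)) (l (2 * m)) (l (2 * m - 1)) t ht hp hq hp' hq'
        (fun s hs => ⟨(hord s hs).1, (hord s hs).2.1, (hord s hs).2.2.1, (hord s hs).2.2.2⟩)
      have hEq : d₁ (m + 1 + 1) t = Real.exp (-δ₂ * t) *
          ((∫ s in (0:ℝ)..t, Real.exp (δ₂ * s) *
              ((1 - g₁₂ (l (2 * m + 2) s)) + (1 - g₂₂ (l (2 * m + 1) s)))) -
            ∫ s in (0:ℝ)..t, Real.exp (δ₂ * s) *
              ((1 - g₁₂ (l (2 * m) s)) + (1 - g₂₂ (l (2 * m - 1) s)))) := by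
        have hD := hd₁ (m + 1 + 1) (by omega) t
        rw [show 2 * (m + 1 + 1) - 1 = 2 * m + 3 from by omega,
          show 2 * (m + 1 + 1) - 3 = 2 * m + 1 from by omega] at hD
        rw [hD, hlA, hlB]
        ring
      have hC : (∫ s in (0:ℝ)..t, Real.exp (δ₂ * s) *
            (μ₂₂ * (l (2 * m + 1) s - l (2 * m - 1) s) +
              μ₁₂ * (l (2 * m + 2) s - l (2 * m) s))) =
          ∫ s in (0:ℝ)..t, Real.exp (δ₂ * s) * (μ₂₂ * d₁ (m + 1) s + μ₁₂ * d₂ (m + 1) s) := by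
        refine intervalIntegral.integral_congr fun s _ => ?_
        have h1 := hd₁ (m + 1) (by omega) s
        rw [E1, E6] at h1
        have h2 := hd₂ (m + 1) (by omega) s
        rw [E9, E2] at h2
        rw [h1, h2]
      rw [hEq, ← hC]
      exact mul_le_mul_of_nonneg_left hkey hexpneg₂
    · -- even part
      have hkey := key δ₁ hδ₁.le g₁₁ g₂₁ μ₁₁ μ₂₁ ha11 ha21 hr11 hr21 hlip11 hlip21
        (l (2 * m + 2)) (l (2 * m + 1)) (l (2 * m)) (l (2 * m - 1)) t ht hp hq hp' hq'
        (fun s hs => ⟨(hord s hs).1, (hord s hs).2.1, (hord s hs).2.2.1, (hord s hs).2.2.2⟩)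
      have hEq : d₂ (m + 1 + 1) t = Real.exp (-δ₁ * t) *
          ((∫ s in (0:ℝ)..t, Real.exp (δ₁ * s) *
              ((1 - g₁₁ (l (2 * m + 2) s)) + (1 - g₂₁ (l (2 * m + 1) s)))) -
            ∫ s in (0:ℝ)..t, Real.exp (δ₁ * s) *
              ((1 - g₁₁ (l (2 * m) s)) + (1 - g₂₁ (l (2 * m - 1) s)))) := by
        have hD := hd₂ (m + 1 + 1) (by omega) t
        rw [show 2 * (m + 1 + 1) - 2 = 2 * m + 2 from by omega,
          show 2 * (m + 1 + 1) = 2 * m + 4 from by omega] at hD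
        rw [hD, hlC, hlD]
        ring
      have hC : (∫ s in (0:ℝ)..t, Real.exp (δ₁ * s) *
            (μ₂₁ * (l (2 * m + 1) s - l (2 * m - 1) s) +
              μ₁₁ * (l (2 * m + 2) s - l (2 * m) s))) =
          ∫ s in (0:ℝ)..t, Real.exp (δ₁ * s) * (μ₂₁ * d₁ (m + 1) s + μ₁₁ * d₂ (m + 1) s) := by
        refine intervalIntegral.integral_congr fun s _ => ?_
        have h1 := hd₁ (m + 1) (by omega) s
        rw [E1, E6] at h1
        have h2 := hd₂ (m + 1) (by omega) s
        rw [E9, E2] at h2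
        rw [h1, h2]
      rw [hEq, ← hC]
      exact mul_le_mul_of_nonneg_left hkey hexpneg₁
end
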